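/- Fix integers N ≥ 1 and L ≥ 1. Define h : [0,N] → ℝ by h(0) = N(1−(1−1/N)^L) and h(x) = (N−x)/(1+x(1−1/N)) for x ∈ (0,N], and define its lower convex envelope B : [0,N] → ℝ by B(R) = inf{ θ·h(x₁) + (1−θ)·h(x₂) : θ ∈ [0,1], x₁, x₂ ∈ [0,N], θ·x₁ + (1−θ)·x₂ = R }. Then for every R ∈ [0,N), B(R) ≤ 4 · max_{1 ≤ ℓ ≤ min(L,N)} (1−(1−1/N)^ℓ) · max(N − ℓR, 0). -/

import Mathlib

lemma aux_pow_mul (x : ℝ) (hx0 : 0 ≤ x) (hx1 : x ≤ 1) (n : ℕ) :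
    (1 - x) ^ n * (1 + (n : ℝ) * x) ≤ 1 := by
  induction n with
  | zero => simp
  | succ n ih =>
      have h1 : (0:ℝ) ≤ (1-x)^n := pow_nonneg (by linarith) n
      have h2 : (1-x) * (1 + ((n:ℝ)+1) * x) ≤ 1 + (n:ℝ) * x := by
        nlinarith [mul_nonneg (Nat.cast_nonneg (α := ℝ) n) (sq_nonneg x), sq_nonneg x]
      calc (1-x)^(n+1) * (1 + ((n+1 : ℕ) : ℝ) * x)
          = (1-x)^n * ((1-x) * (1 + ((n:ℝ)+1) * x)) := by push_cast; ring
        _ ≤ (1-x)^n * (1 + (n:ℝ) * x) := mul_le_mul_of_nonneg_left h2 h1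
        _ ≤ 1 := ih

lemma aux_pow_quad (x : ℝ) (hx0 : 0 ≤ x) (hx1 : x ≤ 1) (n : ℕ) :
    (1 - x) ^ n ≤ 1 - (n : ℝ) * x + (n : ℝ) * ((n : ℝ) - 1) * x ^ 2 / 2 := by
  induction n with
  | zero => simp
  | succ n ih =>
      have h1 : (0:ℝ) ≤ 1 - x := by linarith
      have hn0 : (0:ℝ) ≤ (n:ℝ) := Nat.cast_nonneg n
      have hnn : (0:ℝ) ≤ (n:ℝ) * ((n:ℝ) - 1) := by
        rcases Nat.eq_zero_or_pos n with h | h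
        · subst h; norm_num
        · have : (1:ℝ) ≤ (n:ℝ) := by exact_mod_cast h
          nlinarith
      have h2 := mul_le_mul_of_nonneg_left ih h1
      calc (1-x)^(n+1) = (1-x) * (1-x)^n := by ring
        _ ≤ (1-x) * (1 - (n:ℝ)*x + (n:ℝ)*((n:ℝ)-1)*x^2/2) := h2
        _ ≤ 1 - (((n+1:ℕ)):ℝ)*x + (((n+1:ℕ)):ℝ)*((((n+1:ℕ)):ℝ)-1)*x^2/2 := by
            push_cast
            nlinarith [mul_nonneg (mul_nonneg hnn (sq_nonneg x)) hx0]

/-- The key polynomial inequality for the large-cache regime. -/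
lemma aux_poly (N R : ℝ) (h1 : 1 ≤ 2*R) (h2 : 4*R ≤ N) :
    8*R^2*(N-R)*N^3 ≤ 2*(4*R*N-N+2*R)*(N+R*N-R)*(N^2-4*R^2) := by
  have ha : (0:ℝ) ≤ N - 4*R := by linarith
  have hb : (0:ℝ) ≤ 2*R - 1 := by linarith
  nlinarith [mul_nonneg ha hb,
    mul_nonneg (pow_nonneg ha 1) (pow_nonneg hb 2),
    mul_nonneg (pow_nonneg ha 1) (pow_nonneg hb 3),
    mul_nonneg (pow_nonneg ha 1) (pow_nonneg hb 4),
    mul_nonneg (pow_nonneg ha 1) (pow_nonneg hb 5),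
    mul_nonneg (pow_nonneg ha 2) (pow_nonneg hb 1),
    mul_nonneg (pow_nonneg ha 2) (pow_nonneg hb 2),
    mul_nonneg (pow_nonneg ha 2) (pow_nonneg hb 3),
    mul_nonneg (pow_nonneg ha 2) (pow_nonneg hb 4),
    mul_nonneg (pow_nonneg ha 3) (pow_nonneg hb 1),
    mul_nonneg (pow_nonneg ha 3) (pow_nonneg hb 2),
    mul_nonneg (pow_nonneg ha 3) (pow_nonneg hb 3),
    mul_nonneg (pow_nonneg ha 4) (pow_nonneg hb 1),
    pow_nonneg ha 2, pow_nonneg ha 3, pow_nonneg ha 4,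
    pow_nonneg hb 2, pow_nonneg hb 3, pow_nonneg hb 4, pow_nonneg hb 5]

set_option maxHeartbeats 2000000 in
theorem stmt_2 (N L : ℕ) (hN : 1 ≤ N) (hL : 1 ≤ L)
    (h : ℝ → ℝ)
    (hh0 : h 0 = (N : ℝ) * (1 - (1 - 1 / (N : ℝ)) ^ L))
    (hhx : ∀ x : ℝ, 0 < x → x ≤ (N : ℝ) →
      h x = ((N : ℝ) - x) / (1 + x * (1 - 1 / (N : ℝ))))
    (B : ℝ → ℝ)
    (hB : ∀ R : ℝ, B R = sInf {y : ℝ | ∃ θ x₁ x₂ : ℝ,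
      0 ≤ θ ∧ θ ≤ 1 ∧ 0 ≤ x₁ ∧ x₁ ≤ (N : ℝ) ∧ 0 ≤ x₂ ∧ x₂ ≤ (N : ℝ) ∧
      θ * x₁ + (1 - θ) * x₂ = R ∧ y = θ * h x₁ + (1 - θ) * h x₂})
    (R : ℝ) (hR0 : 0 ≤ R) (hRN : R < (N : ℝ)) :
    B R ≤ 4 * (Finset.Icc 1 (min L N)).sup'
        (Finset.nonempty_Icc.2 (le_min hL hN))
        (fun ℓ : ℕ => (1 - (1 - 1 / (N : ℝ)) ^ ℓ) * max ((N : ℝ) - ℓ * R) 0) := by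
  have hN1 : (1:ℝ) ≤ (N:ℝ) := by exact_mod_cast hN
  have hNpos : (0:ℝ) < (N:ℝ) := by linarith
  set w : ℝ := 1 / (N:ℝ) with hwdef
  have hw0 : 0 < w := by rw [hwdef]; positivity
  have hw1 : w ≤ 1 := by rw [hwdef, div_le_one hNpos]; exact hN1
  have hNw : (N:ℝ) * w = 1 := by rw [hwdef]; field_simp
  set q : ℝ := 1 - w with hqdef
  have hq0 : 0 ≤ q := by rw [hqdef]; linarith
  have hq1 : q ≤ 1 := by rw [hqdef]; linarith
  -- h is nonnegative on [0, N]
  have hden : ∀ x : ℝ, 0 ≤ x → 0 < 1 + x * q :=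
    fun x hx => by nlinarith [mul_nonneg hx hq0]
  have hnn : ∀ x : ℝ, 0 ≤ x → x ≤ (N:ℝ) → 0 ≤ h x := by
    intro x hx hxN
    rcases eq_or_lt_of_le hx with hx' | hx'
    · rw [← hx', hh0]
      have : q ^ L ≤ 1 := pow_le_one₀ hq0 hq1
      nlinarith
    · rw [hhx x hx' hxN]
      exact div_nonneg (by linarith) (hden x hx).le
  -- B R is at most the value of any admissible convex combination
  have hBle : ∀ θ x₁ x₂ : ℝ, 0 ≤ θ → θ ≤ 1 → 0 ≤ x₁ → x₁ ≤ (N:ℝ) → 0 ≤ x₂ →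
      x₂ ≤ (N:ℝ) → θ * x₁ + (1 - θ) * x₂ = R →
      B R ≤ θ * h x₁ + (1 - θ) * h x₂ := by
    intro θ x₁ x₂ c1 c2 c3 c4 c5 c6 c7
    rw [hB]
    apply csInf_le
    · refine ⟨0, ?_⟩
      rintro y ⟨θ', a, b, d1, d2, d3, d4, d5, d6, _, rfl⟩
      have ha := hnn a d3 d4
      have hb := hnn b d5 d6
      have h1θ : (0:ℝ) ≤ 1 - θ' := by linarith
      exact add_nonneg (mul_nonneg d1 ha) (mul_nonneg h1θ hb)
    · exact ⟨θ, x₁, x₂, c1, c2, c3, c4, c5, c6, c7, rfl⟩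
  -- chord upper bound
  have hhN : h (N:ℝ) = 0 := by
    rw [hhx (N:ℝ) hNpos le_rfl]; simp
  have hchord : B R ≤ ((N:ℝ) - R) * (1 - q ^ L) := by
    have hRNdiv0 : 0 ≤ R / (N:ℝ) := div_nonneg hR0 hNpos.le
    have hRNdiv1 : R / (N:ℝ) ≤ 1 := by rw [div_le_one hNpos]; linarith
    have hc := hBle (1 - R/(N:ℝ)) 0 (N:ℝ) (by linarith) (by linarith)
      le_rfl hNpos.le hNpos.le le_rfl (by field_simp; ring)
    rw [hh0, hhN] at hc
    calc B R ≤ (1 - R/(N:ℝ)) * ((N:ℝ) * (1 - q ^ L)) + (1 - (1 - R/(N:ℝ))) * 0 := hc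
      _ = ((N:ℝ) - R) * (1 - q ^ L) := by field_simp; ring
  -- curve upper bound (positive cache)
  have hcurve : 0 < R → B R ≤ ((N:ℝ) - R) / (1 + R * q) := by
    intro hRpos
    have hc := hBle 1 R 0 zero_le_one le_rfl hR0 hRN.le le_rfl hNpos.le (by ring)
    rw [hhx R hRpos hRN.le] at hc
    linarith
  -- reduce to exhibiting a good ℓ
  set m : ℕ := min L N with hmdef
  have hm1 : 1 ≤ m := le_min hL hN
  have hmN : m ≤ N := min_le_right L N
  have hmR : (1:ℝ) ≤ (m:ℝ) := by exact_mod_cast hm1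
  have hmNR : (m:ℝ) ≤ (N:ℝ) := by exact_mod_cast hmN
  suffices hmain : ∃ ℓ ∈ Finset.Icc 1 m,
      B R ≤ 4 * ((1 - q ^ ℓ) * max ((N:ℝ) - (ℓ:ℝ) * R) 0) by
    obtain ⟨ℓ, hmem, hle⟩ := hmain
    exact hle.trans (mul_le_mul_of_nonneg_left
      (Finset.le_sup' (fun ℓ : ℕ => (1 - q ^ ℓ) * max ((N:ℝ) - (ℓ:ℝ) * R) 0) hmem)
      (by norm_num))
  rcases le_or_gt (2 * (m:ℝ) * R) (N:ℝ) with hcase | hcase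
  · -- small cache: chord bound against ℓ = m
    refine ⟨m, Finset.mem_Icc.2 ⟨hm1, le_rfl⟩, ?_⟩
    have hmRle : (m:ℝ) * R ≤ (N:ℝ) / 2 := by nlinarith
    have hmax : max ((N:ℝ) - (m:ℝ) * R) 0 = (N:ℝ) - (m:ℝ) * R :=
      max_eq_left (by linarith)
    have hqL1 : q ^ L ≤ 1 := pow_le_one₀ hq0 hq1
    have hqm1 : q ^ m ≤ 1 := pow_le_one₀ hq0 hq1
    have hhalf : 1 - q ^ L ≤ 2 * (1 - q ^ m) := by
      rcases le_or_gt L N with hLN | hLN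
      · have : m = L := min_eq_left hLN
        rw [this]
        have : 0 ≤ 1 - q ^ L := by linarith
        linarith
      · have hmN' : m = N := min_eq_right hLN.le
        have hqN := aux_pow_mul w hw0.le hw1 N
        rw [hNw] at hqN
        have hqL0 : 0 ≤ q ^ L := pow_nonneg hq0 L
        rw [← hqdef] at hqN
        rw [hmN']
        linarith [hqN]
    rw [hmax]
    have f1 : (N:ℝ) - R ≤ 2 * ((N:ℝ) - (m:ℝ) * R) := by linarith
    have f2 : 0 ≤ 1 - q ^ L := by linarith
    have f3 : 0 ≤ 2 * ((N:ℝ) - (m:ℝ) * R) := by linarith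
    calc B R ≤ ((N:ℝ) - R) * (1 - q ^ L) := hchord
      _ ≤ (2 * ((N:ℝ) - (m:ℝ) * R)) * (2 * (1 - q ^ m)) :=
          mul_le_mul f1 hhalf f2 f3
      _ = 4 * ((1 - q ^ m) * ((N:ℝ) - (m:ℝ) * R)) := by ring
  · -- large cache
    have hRhalf : 1 < 2 * R := by
      by_contra hcon
      push_neg at hcon
      have := mul_le_mul_of_nonneg_left hcon (show (0:ℝ) ≤ (m:ℝ) by linarith)
      linarith
    have hRpos : 0 < R := by linarith
    have hBR := hcurve hRpos
    have hdenR := hden R hR0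
    rcases le_or_gt R ((N:ℝ)/4) with hR4 | hR4
    · -- intermediate regime: ℓ = ⌊N/(2R)⌋
      set t : ℝ := (N:ℝ) / (2*R) with htdef
      have h2R : (0:ℝ) < 2*R := by linarith
      have ht0 : 0 ≤ t := div_nonneg hNpos.le h2R.le
      have ht2 : (2:ℝ) ≤ t := by
        rw [htdef, le_div_iff₀ h2R]; linarith
      set ℓ : ℕ := ⌊t⌋₊ with hldef
      set c : ℝ := (ℓ:ℝ) with hcdef
      have hcle : c ≤ t := Nat.floor_le ht0
      have hclt : t < c + 1 := Nat.lt_floor_add_one t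
      have hl2 : 2 ≤ ℓ := Nat.le_floor (by exact_mod_cast ht2)
      have hc2 : (2:ℝ) ≤ c := by rw [hcdef]; exact_mod_cast hl2
      have hl1 : 1 ≤ ℓ := by omega
      have hlm : ℓ ≤ m := by
        have htm : t < (m:ℝ) := by
          rw [htdef, div_lt_iff₀ h2R]; linarith
        have hcm : c < (m:ℝ) := lt_of_le_of_lt hcle htm
        rw [hcdef] at hcm
        have : ℓ < m := by exact_mod_cast hcm
        omega
      refine ⟨ℓ, Finset.mem_Icc.2 ⟨hl1, hlm⟩, ?_⟩
      have hc2R : 2 * R * c ≤ (N:ℝ) := by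
        have := (le_div_iff₀ h2R).mp hcle
        linarith
      have hc2R' : (N:ℝ) < 2 * R * (c + 1) := by
        have := (div_lt_iff₀ h2R).mp hclt
        linarith
      have hNcR0 : 0 ≤ (N:ℝ) - c * R := by linarith
      have hmax : max ((N:ℝ) - c * R) 0 = (N:ℝ) - c * R := max_eq_left hNcR0
      rw [hmax]
      -- step A
      have hA : (N:ℝ)^2 - 4*R^2 ≤ 4*R*(c*((N:ℝ) - c*R)) := by
        nlinarith [mul_nonneg (show (0:ℝ) ≤ 2*R*(c+1) - (N:ℝ) by linarith)
          (show (0:ℝ) ≤ (N:ℝ) - 2*R*c + 2*R by linarith)]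
      -- step B : quadratic lower bound on 1 - q^ℓ
      have hH := aux_pow_quad w hw0.le hw1 ℓ
      rw [← hqdef, ← hcdef] at hH
      have hS2 : c*w - c*(c-1)*w^2/2 ≤ 1 - q ^ ℓ := by linarith
      have hcN : c ≤ (N:ℝ) := by
        have : t ≤ (N:ℝ) := by
          rw [htdef]; exact div_le_self hNpos.le (by linarith)
        linarith
      have hcw1 : c * w ≤ 1 := by
        calc c * w ≤ (N:ℝ) * w := mul_le_mul_of_nonneg_right hcN hw0.le
          _ = 1 := hNw
      have hc1w : (c-1) * w ≤ 1 := by nlinarith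
      have h2cw : 0 ≤ 2 - (c-1)*w := by linarith
      have hsq : 0 ≤ (N:ℝ)^2 - 4*R^2 := by nlinarith
      -- the main polynomial bound
      have hkey := aux_poly (N:ℝ) R hRhalf.le (by linarith)
      have hFP : 8*R^2*((N:ℝ)-R) ≤
          2*w*(4*R-((N:ℝ)-2*R)*w)*(1+R*q)*((N:ℝ)^2-4*R^2) := by
        have hN3 : (0:ℝ) < (N:ℝ)^3 := by positivity
        have hEq : 2*w*(4*R-((N:ℝ)-2*R)*w)*(1+R*q)*((N:ℝ)^2-4*R^2)
            = 2*(4*R*(N:ℝ)-(N:ℝ)+2*R)*((N:ℝ)+R*(N:ℝ)-R)*((N:ℝ)^2-4*R^2)/(N:ℝ)^3 := by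
          rw [hqdef, hwdef]
          field_simp
          ring
        rw [hEq, le_div_iff₀ hN3]
        nlinarith [hkey]
      -- assemble the chain
      have hK4 : 4*R - ((N:ℝ)-2*R)*w ≤ 2*R*(2-(c-1)*w) := by
        nlinarith [mul_le_mul_of_nonneg_right
          (show 2*R*(c-1) ≤ (N:ℝ) - 2*R by linarith) hw0.le]
      have hγ : 0 ≤ 2*w*(1+R*q)*((N:ℝ)^2-4*R^2) :=
        mul_nonneg (mul_nonneg (by positivity) hdenR.le) hsq
      have step2 := mul_le_mul_of_nonneg_right hK4 hγ
      have hβ : 0 ≤ 4*R*(w*(2-(c-1)*w)*(1+R*q)) :=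
        mul_nonneg (by positivity) (mul_nonneg (mul_nonneg hw0.le h2cw) hdenR.le)
      have step1 := mul_le_mul_of_nonneg_left hA hβ
      have hZ : 8*R^2*((N:ℝ)-R) ≤
          8*R^2*(4*((c*w - c*(c-1)*w^2/2)*(((N:ℝ)-c*R)*(1+R*q)))) := by
        calc 8*R^2*((N:ℝ)-R)
            ≤ 2*w*(4*R-((N:ℝ)-2*R)*w)*(1+R*q)*((N:ℝ)^2-4*R^2) := hFP
          _ = (4*R-((N:ℝ)-2*R)*w) * (2*w*(1+R*q)*((N:ℝ)^2-4*R^2)) := by ring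
          _ ≤ (2*R*(2-(c-1)*w)) * (2*w*(1+R*q)*((N:ℝ)^2-4*R^2)) := step2
          _ = 4*R*(w*(2-(c-1)*w)*(1+R*q)) * ((N:ℝ)^2-4*R^2) := by ring
          _ ≤ 4*R*(w*(2-(c-1)*w)*(1+R*q)) * (4*R*(c*((N:ℝ)-c*R))) := step1
          _ = 8*R^2*(4*((c*w - c*(c-1)*w^2/2)*(((N:ℝ)-c*R)*(1+R*q)))) := by ring
      have hZ' : (N:ℝ) - R ≤ 4*((c*w - c*(c-1)*w^2/2)*(((N:ℝ)-c*R)*(1+R*q))) := by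
        have h8 : (0:ℝ) < 8*R^2 := by positivity
        exact le_of_mul_le_mul_left (by linarith [hZ]) h8
      have hK1 := mul_le_mul_of_nonneg_right hS2 (mul_nonneg hNcR0 hdenR.le)
      refine le_trans hBR ?_
      rw [div_le_iff₀ hdenR]
      calc (N:ℝ) - R
          ≤ 4*((c*w - c*(c-1)*w^2/2)*(((N:ℝ)-c*R)*(1+R*q))) := hZ'
        _ ≤ 4*((1 - q ^ ℓ)*(((N:ℝ)-c*R)*(1+R*q))) :=
            mul_le_mul_of_nonneg_left hK1 (by norm_num)
        _ = 4*((1 - q ^ ℓ)*((N:ℝ)-c*R))*(1+R*q) := by ring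
    · -- ℓ = 1
      refine ⟨1, Finset.mem_Icc.2 ⟨le_rfl, hm1⟩, ?_⟩
      have hmax : max ((N:ℝ) - (1:ℕ) * R) 0 = (N:ℝ) - R := by
        rw [max_eq_left (by push_cast; linarith)]; push_cast; ring
      rw [hmax, pow_one]
      have hkey1 : (N:ℝ) ≤ 4 * (1 + R*q) := by
        have hRq : R*q = R - R*w := by rw [hqdef]; ring
        have hRw : R*w ≤ 1 := by
          have := mul_le_mul_of_nonneg_right hRN.le hw0.le
          linarith [hNw]
        linarith
      have hNR0 : 0 ≤ (N:ℝ) - R := by linarith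
      refine hBR.trans ?_
      rw [div_le_iff₀ hdenR]
      have h1q : 1 - q = w := by rw [hqdef]; ring
      rw [h1q]
      have hprod := mul_le_mul_of_nonneg_left hkey1 (mul_nonneg hw0.le hNR0)
      have hNwNR : w * ((N:ℝ) - R) * (N:ℝ) = (N:ℝ) - R := by
        have : (N:ℝ) * w = 1 := hNw
        nlinarith [this]
      nlinarith [hprod, hNwNR]
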